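/- arXiv:1210.4543 — 4 statements merged into one kernel-verified Lean document; each statement's English description precedes it below -/
import Mathlib

section
/- If a permutation α ∈ S_s consists of a single cycle of length s (s ≥ 2), then for any two distinct letters i < j in {1,...,s} there exists a k with 1 ≤ k < s such that α^k(i) > α^k(j). -/
/-- If a permutation `α ∈ S_s` is a single cycle of length `s` (`s ≥ 2`), then for any
two letters `i < j` there is a `k` with `1 ≤ k < s` such that `α^k i > α^k j`. -/
theorem single_cycle_strings_cross (s : ℕ) (hs : 2 ≤ s) (α : Equiv.Perm (Fin s))
    (hα : α.IsCycle ∧ α.support = Finset.univ) (i j : Fin s) (hij : i < j) :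
    ∃ k : ℕ, 1 ≤ k ∧ k < s ∧ (α ^ k) j < (α ^ k) i := by
  obtain ⟨hc, hsup⟩ := hα
  have hmoved : ∀ x : Fin s, α x ≠ x := fun x => by
    have hx := Finset.mem_univ x
    rw [← hsup, Equiv.Perm.mem_support] at hx
    exact hx
  have horder : orderOf α = s := by
    rw [hc.orderOf, hsup, Finset.card_univ, Fintype.card_fin]
  set t : Fin s := ⟨s - 1, by omega⟩ with ht_def
  have ht : ∀ y : Fin s, y ≤ t := fun y => by
    have := y.isLt
    rw [Fin.le_def]
    simp only [ht_def]
    omega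
  have hsc : α.SameCycle i t := by
    obtain ⟨x, hx, hxall⟩ := hc
    exact (hxall (hmoved i)).symm.trans (hxall (hmoved t))
  obtain ⟨k, hk, hki⟩ := hsc.exists_pow_eq'
  rw [horder] at hk
  have hk1 : 1 ≤ k := by
    rcases Nat.eq_zero_or_pos k with h0 | h; swap
    · exact h
    · exfalso
      rw [h0, pow_zero, Equiv.Perm.coe_one, id] at hki
      have := lt_of_lt_of_le hij (ht j)
      rw [hki] at this
      exact lt_irrefl t this
  refine ⟨k, hk1, hk, ?_⟩
  have hne : (α ^ k) j ≠ (α ^ k) i := fun h => (ne_of_lt hij).symm ((α ^ k).injective h)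
  rw [hki]
  exact lt_of_le_of_ne (by rw [← hki]; exact (hki ▸ ht _)) (hki ▸ hne)
end

section
/- The curve t ↦ (cos(2t+6), cos(3t+0.15), cos(4t+1)+cos(5t)) for t ∈ [0,2π] is a closed curve without self-intersections (i.e., it is injective on [0,2π)). -/
open Real

/-- `N * π` is never a nonzero rational. -/
lemma pi_mul_ne (N : ℤ) (q : ℚ) (hq : q ≠ 0) : ((N : ℝ) * π ≠ (q : ℝ)) := by
  rcases eq_or_ne N 0 with rfl | hN
  · simpa using (Rat.cast_ne_zero (α := ℝ)).mpr hq |>.symm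
  · exact fun h => (irrational_pi.intCast_mul hN).ne_rat q h

lemma endgame (k₁ : ℤ)
    (key : Real.sin 11 ^ 2 = Real.sin (5 * ((k₁ : ℝ) * π - 6) / 2) ^ 2) : False := by
  have hcos : Real.cos (2 * 11) = Real.cos (2 * (5 * ((k₁ : ℝ) * π - 6) / 2)) := by
    rw [Real.cos_two_mul, Real.cos_two_mul]
    have a1 := Real.sin_sq_add_cos_sq (11 : ℝ)
    have a2 := Real.sin_sq_add_cos_sq (5 * ((k₁ : ℝ) * π - 6) / 2)
    nlinarith [key, a1, a2]
  rw [Real.cos_eq_cos_iff] at hcos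
  obtain ⟨n, hn | hn⟩ := hcos
  · exact pi_mul_ne (5 * k₁ - 2 * n) 52 (by norm_num) (by push_cast; linarith)
  · exact pi_mul_ne (5 * k₁ - 2 * n) 8 (by norm_num) (by push_cast; linarith)

lemma case3_aux (k₁ : ℤ)
    (hz : (Real.sin 11 - Real.sin (5 * ((k₁ : ℝ) * π - 6) / 2)) * Real.sqrt 3 = 0 ∨
          (Real.sin 11 + Real.sin (5 * ((k₁ : ℝ) * π - 6) / 2)) * Real.sqrt 3 = 0) : False := by
  have h3 : Real.sqrt 3 ≠ 0 := by positivity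
  apply endgame k₁
  rcases hz with hz | hz <;> rcases mul_eq_zero.mp hz with hz | hz <;>
    first
      | (have h' : Real.sin 11 = Real.sin (5 * ((k₁ : ℝ) * π - 6) / 2) := by linarith
         rw [h'])
      | (have h' : Real.sin 11 = -Real.sin (5 * ((k₁ : ℝ) * π - 6) / 2) := by linarith
         rw [h']; ring)
      | exact absurd hz h3

/-- The Fourier parametrization
`t ↦ (cos(2t+6), cos(3t+0.15), cos(4t+1)+cos(5t))` of the trefoil is a closed curve
without self-intersections: it is injective on `[0, 2π)`. -/
theorem trefoil_fourier_injective :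
    Set.InjOn (fun t : ℝ =>
        ((Real.cos (2 * t + 6), Real.cos (3 * t + 0.15),
          Real.cos (4 * t + 1) + Real.cos (5 * t)) : ℝ × ℝ × ℝ))
      (Set.Ico 0 (2 * π)) := by
  have hπ := Real.pi_pos
  intro s hs t ht h
  simp only [Prod.mk.injEq] at h
  obtain ⟨h1, h2, h3⟩ := h
  obtain ⟨hs0, hs2⟩ := hs
  obtain ⟨ht0, ht2⟩ := ht
  rw [Real.cos_eq_cos_iff] at h1 h2
  obtain ⟨k₁, h1⟩ := h1
  obtain ⟨k₂, h2⟩ := h2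
  norm_num at h2
  rcases h1 with h1 | h1 <;> rcases h2 with h2 | h2
  · -- (+,+)
    have e1 : t - s = (k₁ : ℝ) * π := by linarith
    have e2 : 3 * (t - s) = 2 * (k₂ : ℝ) * π := by linarith
    have l1 : (-2 : ℝ) < (k₁ : ℝ) := (mul_lt_mul_iff_left₀ hπ).mp (by linarith)
    have l2 : ((k₁ : ℝ)) < 2 := (mul_lt_mul_iff_left₀ hπ).mp (by linarith)
    have l1' : (-2 : ℤ) < k₁ := by exact_mod_cast l1
    have l2' : k₁ < 2 := by exact_mod_cast l2
    interval_cases k₁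
    · -- k₁ = -1
      exfalso
      have h0 : ((2 * k₂ + 3 : ℤ) : ℝ) * π = 0 := by push_cast; push_cast at e1; linarith
      rcases mul_eq_zero.mp h0 with h' | h'
      · have : (2 * k₂ + 3 : ℤ) = 0 := by exact_mod_cast h'
        omega
      · linarith
    · push_cast at e1; linarith
    · -- k₁ = 1
      exfalso
      have h0 : ((2 * k₂ - 3 : ℤ) : ℝ) * π = 0 := by push_cast; push_cast at e1; linarith
      rcases mul_eq_zero.mp h0 with h' | h'
      · have : (2 * k₂ - 3 : ℤ) = 0 := by exact_mod_cast h'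
        omega
      · linarith
  · -- (+,-)
    have e1 : t - s = (k₁ : ℝ) * π := by linarith
    rcases Int.even_or_odd k₁ with ⟨a, ha⟩ | ⟨a, ha⟩
    · subst ha
      have l1 : (-2 : ℝ) < ((a : ℝ) + a) := (mul_lt_mul_iff_left₀ hπ).mp (by push_cast at e1; linarith)
      have l2 : ((a : ℝ) + a) < 2 := (mul_lt_mul_iff_left₀ hπ).mp (by push_cast at e1; linarith)
      have l1' : (-2 : ℤ) < a + a := by exact_mod_cast l1
      have l2' : a + a < 2 := by exact_mod_cast l2
      have ha0 : a = 0 := by omega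
      subst ha0
      push_cast at e1
      linarith
    · exfalso
      subst ha
      have hc1 : Real.cos (4 * t + 1) = Real.cos (4 * s + 1) := by
        rw [show 4 * t + 1 = (4 * s + 1) + ((4 * a + 2 : ℤ) : ℝ) * (2 * π) by
          push_cast; push_cast at e1; linarith, Real.cos_add_int_mul_two_pi]
      have hc2 : Real.cos (5 * t) = -Real.cos (5 * s) := by
        rw [show 5 * t = (5 * s + π) + ((5 * a + 2 : ℤ) : ℝ) * (2 * π) by
          push_cast; push_cast at e1; linarith, Real.cos_add_int_mul_two_pi, Real.cos_add_pi]
      have h5 : Real.cos (5 * s) = 0 := by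
        rw [hc1, hc2] at h3; linarith
      rw [Real.cos_eq_zero_iff] at h5
      obtain ⟨n, hn⟩ := h5
      exact pi_mul_ne (12 * n + 36 + 60 * a - 20 * k₂) (-3) (by norm_num)
        (by push_cast at hn e1 h2 ⊢; linarith)
  · -- (-,+)
    have hsum : t + s = (k₁ : ℝ) * π - 6 := by linarith
    have e2 : 3 * (t - s) = 2 * (k₂ : ℝ) * π := by linarith
    have l1 : (-6 : ℝ) < 2 * (k₂ : ℝ) := (mul_lt_mul_iff_left₀ hπ).mp (by linarith)
    have l2 : 2 * ((k₂ : ℝ)) < 6 := (mul_lt_mul_iff_left₀ hπ).mp (by linarith)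
    have l1' : (-6 : ℤ) < 2 * k₂ := by exact_mod_cast l1
    have l2' : 2 * k₂ < 6 := by exact_mod_cast l2
    have b1 : (-3 : ℤ) < k₂ := by omega
    have b2 : k₂ < 3 := by omega
    have e : Real.cos (4 * s + 1) - Real.cos (4 * t + 1) = Real.cos (5 * t) - Real.cos (5 * s) := by
      linarith
    rw [Real.cos_sub_cos, Real.cos_sub_cos] at e
    rw [show (4 * s + 1 + (4 * t + 1)) / 2 = (-11) + ((k₁ : ℤ) : ℝ) * (2 * π) by
          push_cast; linarith,
        Real.sin_add_int_mul_two_pi,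
        show (5 * t + 5 * s) / 2 = 5 * ((k₁ : ℝ) * π - 6) / 2 by linarith] at e
    interval_cases k₂
    · -- k₂ = -2 : t - s = -4π/3
      exfalso
      rw [show (4 * s + 1 - (4 * t + 1)) / 2 = (π - π / 3) + ((1 : ℤ) : ℝ) * (2 * π) by
            push_cast; push_cast at e2; linarith,
          show (5 * t - 5 * s) / 2 = (π - π / 3) + ((-2 : ℤ) : ℝ) * (2 * π) by
            push_cast; push_cast at e2; linarith,
          Real.sin_add_int_mul_two_pi, Real.sin_add_int_mul_two_pi] at e
      simp only [Real.sin_neg, Real.sin_pi_sub, Real.sin_add_pi, Real.sin_pi_div_three,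
        neg_neg] at e
      exact case3_aux k₁ (Or.inr (by linarith))
    · -- k₂ = -1 : t - s = -2π/3
      exfalso
      rw [show (4 * s + 1 - (4 * t + 1)) / 2 = π / 3 + π by push_cast at e2; linarith,
          show (5 * t - 5 * s) / 2 = π / 3 + ((-1 : ℤ) : ℝ) * (2 * π) by
            push_cast; push_cast at e2; linarith,
          Real.sin_add_int_mul_two_pi] at e
      simp only [Real.sin_neg, Real.sin_pi_sub, Real.sin_add_pi, Real.sin_pi_div_three,
        neg_neg] at e
      exact case3_aux k₁ (Or.inl (by linarith))
    · push_cast at e2; linarith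
    · -- k₂ = 1 : t - s = 2π/3
      exfalso
      rw [show (4 * s + 1 - (4 * t + 1)) / 2 = (π - π / 3) + ((-1 : ℤ) : ℝ) * (2 * π) by
            push_cast; push_cast at e2; linarith,
          show (5 * t - 5 * s) / 2 = (-(π / 3)) + ((1 : ℤ) : ℝ) * (2 * π) by
            push_cast; push_cast at e2; linarith,
          Real.sin_add_int_mul_two_pi, Real.sin_add_int_mul_two_pi] at e
      simp only [Real.sin_neg, Real.sin_pi_sub, Real.sin_add_pi, Real.sin_pi_div_three,
        neg_neg] at e
      exact case3_aux k₁ (Or.inl (by linarith))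
    · -- k₂ = 2 : t - s = 4π/3
      exfalso
      rw [show (4 * s + 1 - (4 * t + 1)) / 2 = (π / 3 + π) + ((-2 : ℤ) : ℝ) * (2 * π) by
            push_cast; push_cast at e2; linarith,
          show (5 * t - 5 * s) / 2 = (π / 3 + π) + ((1 : ℤ) : ℝ) * (2 * π) by
            push_cast; push_cast at e2; linarith,
          Real.sin_add_int_mul_two_pi, Real.sin_add_int_mul_two_pi] at e
      simp only [Real.sin_neg, Real.sin_pi_sub, Real.sin_add_pi, Real.sin_pi_div_three,
        neg_neg] at e
      exact case3_aux k₁ (Or.inr (by linarith))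
  · -- (-,-)
    exfalso
    exact pi_mul_ne (3 * k₁ - 2 * k₂) (177 / 10) (by norm_num) (by push_cast; linarith)
end

section
/- The curve t ↦ (cos(2t+0.8), cos(3t+0.15), cos(4t+1)+cos(5t)) for t ∈ [0,2π] is a closed curve without self-intersections (i.e., it is injective on [0,2π)). -/
open Real

private lemma sin_shift {x y : ℝ} (n : ℤ) (h : x = y + n * (2 * π)) :
    Real.sin x = Real.sin y := by
  rw [h, Real.sin_add_int_mul_two_pi]

private lemma pi_ne_rat (c : ℤ) (q : ℚ) (hq : q ≠ 0) : (c : ℝ) * π ≠ (q : ℝ) := by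
  intro h
  rcases eq_or_ne c 0 with rfl | hc
  · simp at h
    exact hq (by exact_mod_cast h.symm)
  · have hc' : (c : ℝ) ≠ 0 := Int.cast_ne_zero.mpr hc
    have hπ : π = ((q / c : ℚ) : ℝ) := by
      push_cast
      field_simp
      linarith [h]
    exact irrational_pi ⟨q / c, hπ.symm⟩

private lemma c2_neg : Real.cos 2 < 0 :=
  Real.cos_neg_of_pi_div_two_lt_of_lt (by linarith [Real.pi_lt_four]) (by linarith [Real.pi_gt_three])

private lemma s2_pos : 0 < Real.sin 2 :=
  Real.sin_pos_of_pos_of_lt_pi (by norm_num) (by linarith [Real.pi_gt_three])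

private lemma s6_pos : 0 < Real.sin 0.6 :=
  Real.sin_pos_of_pos_of_lt_pi (by norm_num) (by nlinarith [Real.pi_gt_three])

private lemma s6_lt_s2 : Real.sin 0.6 < Real.sin 2 := by
  have h := Real.strictMonoOn_sin (a := 0.6) (b := π - 2)
    ⟨by nlinarith [Real.pi_gt_three], by nlinarith [Real.pi_gt_three]⟩
    ⟨by nlinarith [Real.pi_gt_three], by nlinarith [Real.pi_lt_four]⟩
    (by nlinarith [Real.pi_gt_three])
  rwa [Real.sin_pi_sub] at h

private lemma negc2_lt_s6 : -Real.cos 2 < Real.sin 0.6 := by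
  have h := Real.strictMonoOn_sin (a := 2 - π / 2) (b := 0.6)
    ⟨by nlinarith [Real.pi_gt_three], by nlinarith [Real.pi_gt_three]⟩
    ⟨by nlinarith [Real.pi_gt_three], by nlinarith [Real.pi_gt_three]⟩
    (by nlinarith [Real.pi_gt_d2])
  rwa [show (2 - π / 2 : ℝ) = -(π / 2 - 2) by ring, Real.sin_neg,
    Real.sin_pi_div_two_sub] at h

set_option maxHeartbeats 2000000 in
/-- The Fourier parametrization
`t ↦ (cos(2t+0.8), cos(3t+0.15), cos(4t+1)+cos(5t))` of the figure-eight knot is a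
closed curve without self-intersections: it is injective on `[0, 2π)`. -/
theorem figure_eight_fourier_injective :
    Set.InjOn (fun t : ℝ =>
        ((Real.cos (2 * t + 0.8), Real.cos (3 * t + 0.15),
          Real.cos (4 * t + 1) + Real.cos (5 * t)) : ℝ × ℝ × ℝ))
      (Set.Ico 0 (2 * π)) := by
  intro t ht s hs h
  simp only [Prod.mk.injEq] at h
  obtain ⟨h1, h2, h3⟩ := h
  obtain ⟨ht0, ht2⟩ := ht
  obtain ⟨hs0, hs2⟩ := hs
  -- product-to-sum identity for the third coordinate
  have key : Real.sin (2*(t+s)+1) * Real.sin (2*(t-s))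
      + Real.sin (5*(t+s)/2) * Real.sin (5*(t-s)/2) = 0 := by
    have e1 := Real.cos_sub_cos (4*t+1) (4*s+1)
    have e2 := Real.cos_sub_cos (5*t) (5*s)
    rw [show (4*t+1 + (4*s+1))/2 = 2*(t+s)+1 by ring,
        show (4*t+1 - (4*s+1))/2 = 2*(t-s) by ring] at e1
    rw [show (5*t + 5*s)/2 = 5*(t+s)/2 by ring,
        show (5*t - 5*s)/2 = 5*(t-s)/2 by ring] at e2
    linarith [h3, e1, e2]
  have hsq3 : (0:ℝ) < Real.sqrt 3 := Real.sqrt_pos.mpr (by norm_num)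
  have hA : 0 < Real.sqrt 3 * (Real.sin 0.6 - Real.cos 2) :=
    mul_pos hsq3 (by linarith [c2_neg, s6_pos])
  have hB : 0 < Real.sqrt 3 * (Real.sin 0.6 + Real.cos 2) :=
    mul_pos hsq3 (by linarith [negc2_lt_s6])
  have hC : 0 < Real.sqrt 3 * (Real.sin 2 - Real.sin 0.6) :=
    mul_pos hsq3 (by linarith [s6_lt_s2])
  have hD : 0 < Real.sqrt 3 * (Real.sin 2 + Real.sin 0.6) :=
    mul_pos hsq3 (by linarith [s2_pos, s6_pos])
  rw [Real.cos_eq_cos_iff] at h1 h2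
  obtain ⟨k, hk | hk⟩ := h1 <;> obtain ⟨m, hm | hm⟩ := h2
  · -- s - t = kπ and s - t = 2mπ/3
    have hd1 : s - t = (k:ℝ) * π := by linarith
    have hd2 : 3*(s - t) = 2*(m:ℝ)*π := by linarith
    have h12 : ((3*k - 2*m : ℤ) : ℝ) * π = 0 := by push_cast; linarith
    have h12' : (3*k - 2*m : ℤ) = 0 := by
      rcases mul_eq_zero.mp h12 with h | h
      · exact_mod_cast h
      · exact absurd h Real.pi_ne_zero
    obtain ⟨j, rfl⟩ : ∃ j, k = 2*j := ⟨m - k, by omega⟩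
    have hj1 : ((2*j : ℤ) : ℝ) * π < 2 * π := by linarith
    have hj2 : -(2 * π) < ((2*j : ℤ) : ℝ) * π := by linarith
    have hj1' : (j:ℝ) * π < 1 * π := by push_cast at hj1 ⊢; linarith
    have hj2' : (-1 : ℝ) * π < (j:ℝ) * π := by push_cast at hj2 ⊢; linarith
    have hjlt : (j:ℝ) < 1 := (mul_lt_mul_iff_left₀ Real.pi_pos).mp hj1'
    have hjgt : (-1:ℝ) < (j:ℝ) := (mul_lt_mul_iff_left₀ Real.pi_pos).mp hj2'
    have : j = 0 := by
      have a : j < 1 := by exact_mod_cast hjlt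
      have b : -1 < j := by exact_mod_cast hjgt
      omega
    subst this
    push_cast at hd1
    linarith
  · -- s - t = kπ, 3(s+t) = 2mπ - 0.3
    have hd1 : s - t = (k:ℝ) * π := by linarith
    have hσ : 3*(s + t) = 2*(m:ℝ)*π - 0.3 := by linarith
    have hk1' : (k:ℝ) * π < 2 * π := by linarith
    have hk2' : -(2:ℝ) * π < (k:ℝ) * π := by linarith
    have hklt : k < 2 := by
      exact_mod_cast (mul_lt_mul_iff_left₀ Real.pi_pos).mp (by linarith : (k:ℝ)*π < 2*π)
    have hkgt : -2 < k := by
      exact_mod_cast (mul_lt_mul_iff_left₀ Real.pi_pos).mp (by linarith : (-2:ℝ)*π < (k:ℝ)*π)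
    interval_cases k
    · -- k = -1 : t - s = π
      exfalso
      push_cast at hd1
      have e2 : Real.sin (2*(t-s)) = Real.sin (0:ℝ) := sin_shift 1 (by push_cast; linarith)
      have e4 : Real.sin (5*(t-s)/2) = Real.sin (π/2) := sin_shift 1 (by push_cast; linarith)
      rw [e2, e4, Real.sin_zero, Real.sin_pi_div_two] at key
      have hz : Real.sin (5*(t+s)/2) = 0 := by linarith
      rw [Real.sin_eq_zero_iff] at hz
      obtain ⟨n, hn⟩ := hz
      exact pi_ne_rat (10*m - 6*n) (3/2) (by norm_num) (by push_cast; linarith)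
    · push_cast at hd1; linarith
    · -- k = 1 : t - s = -π
      exfalso
      push_cast at hd1
      have e2 : Real.sin (2*(t-s)) = Real.sin (0:ℝ) := sin_shift (-1) (by push_cast; linarith)
      have e4 : Real.sin (5*(t-s)/2) = Real.sin (-(π/2)) := sin_shift (-1) (by push_cast; linarith)
      rw [e2, e4, Real.sin_zero, Real.sin_neg, Real.sin_pi_div_two] at key
      have hz : Real.sin (5*(t+s)/2) = 0 := by linarith
      rw [Real.sin_eq_zero_iff] at hz
      obtain ⟨n, hn⟩ := hz
      exact pi_ne_rat (10*m - 6*n) (3/2) (by norm_num) (by push_cast; linarith)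
  · -- s + t = kπ - 0.8, s - t = 2mπ/3
    have hσ : 2*(s + t) = 2*(k:ℝ)*π - 1.6 := by linarith
    have hδ : 3*(s - t) = 2*(m:ℝ)*π := by linarith
    have e1 : Real.sin (2*(t+s)+1) = Real.sin (-(0.6:ℝ)) := sin_shift k (by push_cast; linarith)
    have hmlt : m < 3 := by
      exact_mod_cast (mul_lt_mul_iff_left₀ Real.pi_pos).mp (by linarith : (m:ℝ)*π < 3*π)
    have hmgt : -3 < m := by
      exact_mod_cast (mul_lt_mul_iff_left₀ Real.pi_pos).mp (by linarith : (-3:ℝ)*π < (m:ℝ)*π)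
    have hkgt : 0 < k := by
      exact_mod_cast (mul_lt_mul_iff_left₀ Real.pi_pos).mp
        (by nlinarith [Real.pi_gt_three] : (0:ℝ)*π < (k:ℝ)*π)
    have hklt : k < 5 := by
      exact_mod_cast (mul_lt_mul_iff_left₀ Real.pi_pos).mp
        (by nlinarith [Real.pi_gt_three] : (k:ℝ)*π < 5*π)
    interval_cases m
    · -- m = -2
      exfalso
      have e2 : Real.sin (2*(t-s)) = Real.sin (π - π/3) := sin_shift 1 (by push_cast; linarith)
      have e4 : Real.sin (5*(t-s)/2) = Real.sin (-(π - π/3)) := sin_shift 2 (by push_cast; linarith)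
      interval_cases k
      · have e3 : Real.sin (5*(t+s)/2) = Real.sin (π/2 - 2) := sin_shift 1 (by push_cast; linarith)
        rw [e1, e2, e3, e4] at key
        simp [Real.sin_neg, Real.sin_sub, Real.sin_add, Real.sin_pi_div_three,
          Real.cos_pi_div_three] at key
        linarith [hA, hB, hC, hD]
      · have e3 : Real.sin (5*(t+s)/2) = Real.sin (π - 2) := sin_shift 2 (by push_cast; linarith)
        rw [e1, e2, e3, e4] at key
        simp [Real.sin_neg, Real.sin_sub, Real.sin_add, Real.sin_pi_div_three,
          Real.cos_pi_div_three] at key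
        linarith [hA, hB, hC, hD]
      · have e3 : Real.sin (5*(t+s)/2) = Real.sin (π + (π/2 - 2)) := sin_shift 3 (by push_cast; linarith)
        rw [e1, e2, e3, e4] at key
        simp [Real.sin_neg, Real.sin_sub, Real.sin_add, Real.sin_pi_div_three,
          Real.cos_pi_div_three] at key
        linarith [hA, hB, hC, hD]
      · have e3 : Real.sin (5*(t+s)/2) = Real.sin (-(2:ℝ)) := sin_shift 5 (by push_cast; linarith)
        rw [e1, e2, e3, e4] at key
        simp [Real.sin_neg, Real.sin_sub, Real.sin_add, Real.sin_pi_div_three,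
          Real.cos_pi_div_three] at key
        linarith [hA, hB, hC, hD]
    · -- m = -1
      exfalso
      have e2 : Real.sin (2*(t-s)) = Real.sin (-(π - π/3)) := sin_shift 1 (by push_cast; linarith)
      have e4 : Real.sin (5*(t-s)/2) = Real.sin (-(π/3)) := sin_shift 1 (by push_cast; linarith)
      interval_cases k
      · have e3 : Real.sin (5*(t+s)/2) = Real.sin (π/2 - 2) := sin_shift 1 (by push_cast; linarith)
        rw [e1, e2, e3, e4] at key
        simp [Real.sin_neg, Real.sin_sub, Real.sin_add, Real.sin_pi_div_three,
          Real.cos_pi_div_three] at key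
        linarith [hA, hB, hC, hD]
      · have e3 : Real.sin (5*(t+s)/2) = Real.sin (π - 2) := sin_shift 2 (by push_cast; linarith)
        rw [e1, e2, e3, e4] at key
        simp [Real.sin_neg, Real.sin_sub, Real.sin_add, Real.sin_pi_div_three,
          Real.cos_pi_div_three] at key
        linarith [hA, hB, hC, hD]
      · have e3 : Real.sin (5*(t+s)/2) = Real.sin (π + (π/2 - 2)) := sin_shift 3 (by push_cast; linarith)
        rw [e1, e2, e3, e4] at key
        simp [Real.sin_neg, Real.sin_sub, Real.sin_add, Real.sin_pi_div_three,
          Real.cos_pi_div_three] at key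
        linarith [hA, hB, hC, hD]
      · have e3 : Real.sin (5*(t+s)/2) = Real.sin (-(2:ℝ)) := sin_shift 5 (by push_cast; linarith)
        rw [e1, e2, e3, e4] at key
        simp [Real.sin_neg, Real.sin_sub, Real.sin_add, Real.sin_pi_div_three,
          Real.cos_pi_div_three] at key
        linarith [hA, hB, hC, hD]
    · -- m = 0
      push_cast at hδ
      linarith
    · -- m = 1
      exfalso
      have e2 : Real.sin (2*(t-s)) = Real.sin (π - π/3) := sin_shift (-1) (by push_cast; linarith)
      have e4 : Real.sin (5*(t-s)/2) = Real.sin (π/3) := sin_shift (-1) (by push_cast; linarith)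
      interval_cases k
      · have e3 : Real.sin (5*(t+s)/2) = Real.sin (π/2 - 2) := sin_shift 1 (by push_cast; linarith)
        rw [e1, e2, e3, e4] at key
        simp [Real.sin_neg, Real.sin_sub, Real.sin_add, Real.sin_pi_div_three,
          Real.cos_pi_div_three] at key
        linarith [hA, hB, hC, hD]
      · have e3 : Real.sin (5*(t+s)/2) = Real.sin (π - 2) := sin_shift 2 (by push_cast; linarith)
        rw [e1, e2, e3, e4] at key
        simp [Real.sin_neg, Real.sin_sub, Real.sin_add, Real.sin_pi_div_three,
          Real.cos_pi_div_three] at key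
        linarith [hA, hB, hC, hD]
      · have e3 : Real.sin (5*(t+s)/2) = Real.sin (π + (π/2 - 2)) := sin_shift 3 (by push_cast; linarith)
        rw [e1, e2, e3, e4] at key
        simp [Real.sin_neg, Real.sin_sub, Real.sin_add, Real.sin_pi_div_three,
          Real.cos_pi_div_three] at key
        linarith [hA, hB, hC, hD]
      · have e3 : Real.sin (5*(t+s)/2) = Real.sin (-(2:ℝ)) := sin_shift 5 (by push_cast; linarith)
        rw [e1, e2, e3, e4] at key
        simp [Real.sin_neg, Real.sin_sub, Real.sin_add, Real.sin_pi_div_three,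
          Real.cos_pi_div_three] at key
        linarith [hA, hB, hC, hD]
    · -- m = 2
      exfalso
      have e2 : Real.sin (2*(t-s)) = Real.sin (-(π - π/3)) := sin_shift (-1) (by push_cast; linarith)
      have e4 : Real.sin (5*(t-s)/2) = Real.sin (π - π/3) := sin_shift (-2) (by push_cast; linarith)
      interval_cases k
      · have e3 : Real.sin (5*(t+s)/2) = Real.sin (π/2 - 2) := sin_shift 1 (by push_cast; linarith)
        rw [e1, e2, e3, e4] at key
        simp [Real.sin_neg, Real.sin_sub, Real.sin_add, Real.sin_pi_div_three,
          Real.cos_pi_div_three] at key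
        linarith [hA, hB, hC, hD]
      · have e3 : Real.sin (5*(t+s)/2) = Real.sin (π - 2) := sin_shift 2 (by push_cast; linarith)
        rw [e1, e2, e3, e4] at key
        simp [Real.sin_neg, Real.sin_sub, Real.sin_add, Real.sin_pi_div_three,
          Real.cos_pi_div_three] at key
        linarith [hA, hB, hC, hD]
      · have e3 : Real.sin (5*(t+s)/2) = Real.sin (π + (π/2 - 2)) := sin_shift 3 (by push_cast; linarith)
        rw [e1, e2, e3, e4] at key
        simp [Real.sin_neg, Real.sin_sub, Real.sin_add, Real.sin_pi_div_three,
          Real.cos_pi_div_three] at key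
        linarith [hA, hB, hC, hD]
      · have e3 : Real.sin (5*(t+s)/2) = Real.sin (-(2:ℝ)) := sin_shift 5 (by push_cast; linarith)
        rw [e1, e2, e3, e4] at key
        simp [Real.sin_neg, Real.sin_sub, Real.sin_add, Real.sin_pi_div_three,
          Real.cos_pi_div_three] at key
        linarith [hA, hB, hC, hD]
  · -- both sums: contradiction with irrationality of π
    exfalso
    exact pi_ne_rat (6*k - 4*m) (21/5) (by norm_num) (by push_cast; linarith)
end

section
/- For coprime positive integers p, q, the planar Lissajous-type curve t ↦ (cos(p t + φ), cos(q t + ψ)), t ∈ [0,2π], has only finitely many self-intersection points, provided the curve is not traversed multiply (generic phases φ, ψ). -/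
open Real

private lemma int_mem_Icc_of_abs_le {k : ℤ} {C : ℝ} (h : |(k : ℝ)| ≤ C) :
    k ∈ Finset.Icc (-⌈C⌉) ⌈C⌉ := by
  rw [abs_le] at h
  have hc := Int.le_ceil C
  rw [Finset.mem_Icc]
  constructor
  · have : (-⌈C⌉ : ℝ) ≤ (k : ℝ) := by push_cast; linarith
    exact_mod_cast this
  · have : (k : ℝ) ≤ (⌈C⌉ : ℝ) := by linarith
    exact_mod_cast this

private lemma abs_int_le_of (k : ℤ) (u a b : ℝ) (h : 2 * (k : ℝ) * π = u)
    (hu1 : -(4 * π * a + 2 * b) ≤ u) (hu2 : u ≤ 4 * π * a + 2 * b) :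
    |(k : ℝ)| ≤ 2 * a + b / π := by
  have hpi := Real.pi_pos
  have h2 : 2 * π * (2 * a + b / π) = 4 * π * a + 2 * b := by
    field_simp; ring
  rw [abs_le]
  constructor <;> nlinarith [hpi]

set_option maxHeartbeats 2000000 in
/-- For coprime positive `p, q`, the Lissajous curve `t ↦ (cos(pt+φ), cos(qt+ψ))` on
`[0,2π)` has only finitely many self-intersection parameter pairs, provided all its
double points are transverse (the genericity hypothesis on the phases): whenever two
distinct parameters give the same point, the tangent vectors there are linearly
independent. -/
theorem lissajous_finitely_many_crossings (p q : ℕ) (hp : 0 < p) (hq : 0 < q)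
    (hpq : Nat.Coprime p q) (φ ψ : ℝ)
    (hgen : ∀ t s : ℝ, t ∈ Set.Ico 0 (2 * π) → s ∈ Set.Ico 0 (2 * π) → t ≠ s →
      Real.cos (p * t + φ) = Real.cos (p * s + φ) →
      Real.cos (q * t + ψ) = Real.cos (q * s + ψ) →
      LinearIndependent ℝ
        ![((-(p : ℝ) * Real.sin (p * t + φ), -(q : ℝ) * Real.sin (q * t + ψ)) : ℝ × ℝ),
          ((-(p : ℝ) * Real.sin (p * s + φ), -(q : ℝ) * Real.sin (q * s + ψ)) : ℝ × ℝ)]) :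
    Set.Finite {ts : ℝ × ℝ | ts.1 ∈ Set.Ico 0 (2 * π) ∧ ts.2 ∈ Set.Ico 0 (2 * π) ∧
      ts.1 ≠ ts.2 ∧
      Real.cos (p * ts.1 + φ) = Real.cos (p * ts.2 + φ) ∧
      Real.cos (q * ts.1 + ψ) = Real.cos (q * ts.2 + ψ)} := by
  classical
  have hpi := Real.pi_pos
  have hp' : (0 : ℝ) < p := by exact_mod_cast hp
  have hq' : (0 : ℝ) < q := by exact_mod_cast hq
  set N : ℤ := ⌈2 * ((p : ℝ) + q) + (|φ| + |ψ|) / π⌉ with hN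
  set F : Finset (ℤ × ℤ) := Finset.Icc (-N) N ×ˢ Finset.Icc (-N) N with hF
  set g1 : ℤ × ℤ → ℝ × ℝ := fun km =>
    ((2 * km.1 * π / p + (2 * km.2 * π - 2 * ψ) / q) / 2,
     ((2 * km.2 * π - 2 * ψ) / q - 2 * km.1 * π / p) / 2) with hg1
  set g2 : ℤ × ℤ → ℝ × ℝ := fun km =>
    (((2 * km.1 * π - 2 * φ) / p + 2 * km.2 * π / q) / 2,
     ((2 * km.1 * π - 2 * φ) / p - 2 * km.2 * π / q) / 2) with hg2
  apply Set.Finite.subset (Set.Finite.biUnion F.finite_toSet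
    (fun km _ => (Set.finite_singleton (g1 km)).insert (g2 km)))
  rintro ⟨t, s⟩ ⟨⟨ht0, ht2⟩, ⟨hs0, hs2⟩, hts, hcp, hcq⟩
  obtain ⟨k, hk⟩ := Real.cos_eq_cos_iff.1 hcp
  obtain ⟨m, hm⟩ := Real.cos_eq_cos_iff.1 hcq
  -- membership in the big union, given an index and an equation
  have mem1 : ∀ k' m' : ℤ,
      |(k' : ℝ)| ≤ 2 * ((p : ℝ) + q) + (|φ| + |ψ|) / π →
      |(m' : ℝ)| ≤ 2 * ((p : ℝ) + q) + (|φ| + |ψ|) / π →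
      ((t, s) = g1 (k', m') ∨ (t, s) = g2 (k', m')) →
      ((t, s) : ℝ × ℝ) ∈ ⋃ km ∈ (F : Set (ℤ × ℤ)), insert (g2 km) {g1 km} := by
    intro k' m' hk' hm' heq
    refine Set.mem_biUnion (x := (k', m')) ?_ ?_
    · simp only [hF, Finset.coe_product, Set.mem_prod]
      exact ⟨int_mem_Icc_of_abs_le hk', int_mem_Icc_of_abs_le hm'⟩
    · rcases heq with h | h
      · exact Set.mem_insert_iff.2 (Or.inr (by rw [h]; rfl))
      · exact Set.mem_insert_iff.2 (Or.inl (by rw [h]))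
  rcases hk with hk | hk
  · rcases hm with hm | hm
    · -- both "plus": p(s-t) and q(s-t) both in 2πℤ → t = s, contradiction
      exfalso
      have e1 : (p : ℝ) * (s - t) = 2 * k * π := by linarith
      have e2 : (q : ℝ) * (s - t) = 2 * m * π := by linarith
      have e3 : ((q * k : ℤ) : ℝ) = ((p * m : ℤ) : ℝ) := by
        push_cast
        have h1 : (q : ℝ) * ((p : ℝ) * (s - t)) = q * (2 * k * π) := by rw [e1]
        have h2 : (p : ℝ) * ((q : ℝ) * (s - t)) = p * (2 * m * π) := by rw [e2]
        nlinarith [h1, h2, hpi]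
      have e4 : (q : ℤ) * k = (p : ℤ) * m := by exact_mod_cast e3
      have hco : IsCoprime (p : ℤ) (q : ℤ) := hpq.isCoprime
      have hdvd : (p : ℤ) ∣ k := by
        have : (p : ℤ) ∣ (q : ℤ) * k := ⟨m, e4⟩
        exact hco.dvd_of_dvd_mul_left this
      obtain ⟨j, hj⟩ := hdvd
      have e5 : s - t = 2 * (j : ℝ) * π := by
        have : (p : ℝ) * (s - t) = (p : ℝ) * (2 * (j : ℝ) * π) := by
          rw [e1, hj]; push_cast; ring
        exact mul_left_cancel₀ hp'.ne' this
      have hj0 : j = 0 := by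
        have h1 : -2 * π < s - t := by linarith
        have h2 : s - t < 2 * π := by linarith
        rw [e5] at h1 h2
        have : -1 < (j : ℝ) := by nlinarith
        have : (j : ℝ) < 1 := by nlinarith
        have l1 : -1 < j := by exact_mod_cast ‹-1 < (j : ℝ)›
        have l2 : j < 1 := by exact_mod_cast ‹(j : ℝ) < 1›
        omega
      rw [hj0] at e5
      simp at e5
      exact hts (by linarith)
    · -- plus / minus : case g1 with index (-k, m)
      have d1 : 2 * ((-k : ℤ) : ℝ) * π = (p : ℝ) * (t - s) := by push_cast; linarith
      have d2 : 2 * (m : ℝ) * π = (q : ℝ) * (t + s) + 2 * ψ := by linarith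
      have e1 : t - s = 2 * ((-k : ℤ) : ℝ) * π / p := by
        rw [eq_div_iff hp'.ne']; linarith [d1]
      have e2 : t + s = (2 * m * π - 2 * ψ) / q := by
        rw [eq_div_iff hq'.ne']; linarith [d2]
      have hb1 : (p : ℝ) * (t - s) ≤ 4 * π * ((p : ℝ) + q) + 2 * (|φ| + |ψ|) := by
        nlinarith [abs_nonneg φ, abs_nonneg ψ, mul_pos hq' hpi,
          mul_lt_mul_of_pos_left (show t - s < 2 * π by linarith) hp']
      have hb1' : -(4 * π * ((p : ℝ) + q) + 2 * (|φ| + |ψ|)) ≤ (p : ℝ) * (t - s) := by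
        nlinarith [abs_nonneg φ, abs_nonneg ψ, mul_pos hq' hpi,
          mul_lt_mul_of_pos_left (show -(2 * π) < t - s by linarith) hp']
      have hb2 : (q : ℝ) * (t + s) + 2 * ψ ≤ 4 * π * ((p : ℝ) + q) + 2 * (|φ| + |ψ|) := by
        nlinarith [abs_nonneg φ, le_abs_self ψ, mul_pos hp' hpi,
          mul_lt_mul_of_pos_left (show t + s < 4 * π by linarith) hq']
      have hb2' : -(4 * π * ((p : ℝ) + q) + 2 * (|φ| + |ψ|)) ≤ (q : ℝ) * (t + s) + 2 * ψ := by
        nlinarith [abs_nonneg φ, neg_abs_le ψ, mul_pos hp' hpi, mul_pos hq' hpi,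
          mul_nonneg hq'.le (show (0:ℝ) ≤ t + s by linarith)]
      apply mem1 (-k) m (abs_int_le_of _ _ _ _ d1 hb1' hb1) (abs_int_le_of _ _ _ _ d2 hb2' hb2)
      left
      have ne1 : t = (2 * ((-k : ℤ) : ℝ) * π / p + (2 * m * π - 2 * ψ) / q) / 2 := by
        rw [← e1, ← e2]; ring
      have ne2 : s = ((2 * m * π - 2 * ψ) / q - 2 * ((-k : ℤ) : ℝ) * π / p) / 2 := by
        rw [← e1, ← e2]; ring
      rw [hg1]
      exact Prod.ext ne1 ne2
  · rcases hm with hm | hm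
    · -- minus / plus : case g2 with index (k, -m)
      have d1 : 2 * (k : ℝ) * π = (p : ℝ) * (t + s) + 2 * φ := by linarith
      have d2 : 2 * ((-m : ℤ) : ℝ) * π = (q : ℝ) * (t - s) := by push_cast; linarith
      have e1 : t + s = (2 * k * π - 2 * φ) / p := by
        rw [eq_div_iff hp'.ne']; linarith [d1]
      have e2 : t - s = 2 * ((-m : ℤ) : ℝ) * π / q := by
        rw [eq_div_iff hq'.ne']; linarith [d2]
      have hb1 : (p : ℝ) * (t + s) + 2 * φ ≤ 4 * π * ((p : ℝ) + q) + 2 * (|φ| + |ψ|) := by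
        nlinarith [abs_nonneg ψ, le_abs_self φ, mul_pos hq' hpi,
          mul_lt_mul_of_pos_left (show t + s < 4 * π by linarith) hp']
      have hb1' : -(4 * π * ((p : ℝ) + q) + 2 * (|φ| + |ψ|)) ≤ (p : ℝ) * (t + s) + 2 * φ := by
        nlinarith [abs_nonneg ψ, neg_abs_le φ, mul_pos hp' hpi, mul_pos hq' hpi,
          mul_nonneg hp'.le (show (0:ℝ) ≤ t + s by linarith)]
      have hb2 : (q : ℝ) * (t - s) ≤ 4 * π * ((p : ℝ) + q) + 2 * (|φ| + |ψ|) := by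
        nlinarith [abs_nonneg φ, abs_nonneg ψ, mul_pos hp' hpi,
          mul_lt_mul_of_pos_left (show t - s < 2 * π by linarith) hq']
      have hb2' : -(4 * π * ((p : ℝ) + q) + 2 * (|φ| + |ψ|)) ≤ (q : ℝ) * (t - s) := by
        nlinarith [abs_nonneg φ, abs_nonneg ψ, mul_pos hp' hpi,
          mul_lt_mul_of_pos_left (show -(2 * π) < t - s by linarith) hq']
      apply mem1 k (-m) (abs_int_le_of _ _ _ _ d1 hb1' hb1) (abs_int_le_of _ _ _ _ d2 hb2' hb2)
      right
      have ne1 : t = ((2 * k * π - 2 * φ) / p + 2 * ((-m : ℤ) : ℝ) * π / q) / 2 := by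
        rw [← e1, ← e2]; ring
      have ne2 : s = ((2 * k * π - 2 * φ) / p - 2 * ((-m : ℤ) : ℝ) * π / q) / 2 := by
        rw [← e1, ← e2]; ring
      rw [hg2]
      exact Prod.ext ne1 ne2
    · -- both "minus": tangent vectors are opposite, contradicting genericity
      exfalso
      have hs1 : Real.sin ((p : ℝ) * s + φ) = -Real.sin ((p : ℝ) * t + φ) := by
        rw [hk, show 2 * (k : ℝ) * π - ((p : ℝ) * t + φ)
            = (k : ℝ) * (2 * π) - ((p : ℝ) * t + φ) by ring]
        exact Real.sin_int_mul_two_pi_sub _ _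
      have hs2' : Real.sin ((q : ℝ) * s + ψ) = -Real.sin ((q : ℝ) * t + ψ) := by
        rw [hm, show 2 * (m : ℝ) * π - ((q : ℝ) * t + ψ)
            = (m : ℝ) * (2 * π) - ((q : ℝ) * t + ψ) by ring]
        exact Real.sin_int_mul_two_pi_sub _ _
      have hli := hgen t s ⟨ht0, ht2⟩ ⟨hs0, hs2⟩ hts hcp hcq
      rw [LinearIndependent.pair_iff] at hli
      have := hli 1 1 (by
        rw [hs1, hs2']
        apply Prod.ext <;> simp <;> ring)
      exact one_ne_zero this.1
end
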